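/- Let P be the transition matrix of a Markov chain on a countable state space, let α ∈ [0,1), and define Q := αI + (1-α)P. Let p_k(x) and q_k(x) be the k-step return probabilities to state x for P and Q respectively. Then ∑_{k≥1} q_k(x)/k = -log(1-α) + ∑_{k≥1} p_k(x)/k (as an identity in [0,∞]). -/

import Mathlib

open scoped ENNReal NNReal
open Finset

/-- `k`-step transition probabilities of the Markov kernel `P` on a countable state space. -/
noncomputable def kpow {V : Type*} [DecidableEq V] (P : V → V → ℝ≥0∞) : ℕ → V → V → ℝ≥0∞
  | 0 => fun x y => if x = y then 1 else 0
  | (n + 1) => fun x y => ∑' z, P x z * kpow P n z y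



lemma tsum_ite_le (f : ℕ → ℝ≥0∞) (k : ℕ) :
    ∑' n, (if k ≤ n then f n else 0) = ∑' m, f (m + k) := by
  have h := Summable.sum_add_tsum_nat_add' (f := fun n => if k ≤ n then f n else 0) (k := k) ENNReal.summable
  have h1 : ∑ i ∈ range k, (if k ≤ i then f i else 0) = 0 :=
    Finset.sum_eq_zero fun i hi => if_neg (Nat.not_le.mpr (mem_range.mp hi))
  rw [h1, zero_add] at h
  rw [← h]
  exact tsum_congr fun m => if_pos (Nat.le_add_left k m)

lemma tsum_geom_tail (a : ℝ≥0∞) (k : ℕ) :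
    ∑' n, (if k ≤ n then a ^ n else 0) = a ^ k * (1 - a)⁻¹ := by
  rw [tsum_ite_le]
  simp_rw [pow_add]
  rw [ENNReal.tsum_mul_right, ENNReal.tsum_geometric, mul_comm]

lemma negbin (a : ℝ≥0∞) : ∀ k : ℕ, ∑' m : ℕ, ((m + k).choose k : ℝ≥0∞) * a ^ m = ((1 - a)⁻¹) ^ (k + 1)
  | 0 => by simp [ENNReal.tsum_geometric]
  | (k + 1) => by
    have hcast : ∀ m : ℕ, (((m + (k + 1)).choose (k + 1) : ℕ) : ℝ≥0∞)
        = ∑ i ∈ range (m + 1), ((i + k).choose k : ℝ≥0∞) := by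
      intro m
      rw [← Nat.cast_sum, Nat.sum_range_add_choose m k]
      norm_cast
    calc ∑' m : ℕ, ((m + (k + 1)).choose (k + 1) : ℝ≥0∞) * a ^ m
        = ∑' m : ℕ, ∑' i : ℕ, (if i ≤ m then ((i + k).choose k : ℝ≥0∞) * a ^ m else 0) := by
          refine tsum_congr fun m => ?_
          rw [hcast, Finset.sum_mul,
            tsum_eq_sum (s := range (m + 1))
              (fun i hi => if_neg (fun h => hi (mem_range.mpr (Nat.lt_succ_of_le h))))]
          exact Finset.sum_congr rfl fun i hi =>
            (if_pos (Nat.lt_succ_iff.mp (mem_range.mp hi))).symm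
      _ = ∑' i : ℕ, ∑' m : ℕ, (if i ≤ m then ((i + k).choose k : ℝ≥0∞) * a ^ m else 0) :=
          ENNReal.tsum_comm
      _ = ∑' i : ℕ, ((i + k).choose k : ℝ≥0∞) * (a ^ i * (1 - a)⁻¹) := by
          refine tsum_congr fun i => ?_
          rw [← tsum_geom_tail a i, ← ENNReal.tsum_mul_left]
          exact tsum_congr fun m => by by_cases h : i ≤ m <;> simp [h]
      _ = ((1 - a)⁻¹) ^ (k + 1 + 1) := by
          simp_rw [← mul_assoc]
          rw [ENNReal.tsum_mul_right, negbin a k]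
          ring



lemma binom_step (a b : ℝ≥0∞) (p : ℕ → ℝ≥0∞) (n : ℕ) :
    (∑ j ∈ range (n + 1), a * ((n.choose j : ℝ≥0∞) * a ^ (n - j) * b ^ j * p j))
      + (∑ j ∈ range (n + 1), b * ((n.choose j : ℝ≥0∞) * a ^ (n - j) * b ^ j * p (j + 1)))
    = ∑ j ∈ range (n + 2), (((n + 1).choose j : ℕ) : ℝ≥0∞) * a ^ (n + 1 - j) * b ^ j * p j := by
  have hsplit : ∀ j ∈ range (n + 1),
      (((n + 1).choose (j + 1) : ℕ) : ℝ≥0∞) * a ^ (n + 1 - (j + 1)) * b ^ (j + 1) * p (j + 1)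
        = (n.choose j : ℝ≥0∞) * a ^ (n - j) * b ^ (j + 1) * p (j + 1)
          + (n.choose (j + 1) : ℝ≥0∞) * a ^ (n - j) * b ^ (j + 1) * p (j + 1) := by
    intro j _
    rw [Nat.succ_sub_succ, Nat.choose_succ_succ]
    push_cast
    ring
  rw [Finset.sum_range_succ'
    (fun j => (((n + 1).choose j : ℕ) : ℝ≥0∞) * a ^ (n + 1 - j) * b ^ j * p j) (n + 1),
    Finset.sum_congr rfl hsplit, Finset.sum_add_distrib]
  have hS2 : ∑ j ∈ range (n + 1), b * ((n.choose j : ℝ≥0∞) * a ^ (n - j) * b ^ j * p (j + 1))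
      = ∑ j ∈ range (n + 1), (n.choose j : ℝ≥0∞) * a ^ (n - j) * b ^ (j + 1) * p (j + 1) :=
    Finset.sum_congr rfl fun j _ => by ring
  have hS1 : ∑ j ∈ range (n + 1), a * ((n.choose j : ℝ≥0∞) * a ^ (n - j) * b ^ j * p j)
      = ∑ j ∈ range (n + 1), (n.choose (j + 1) : ℝ≥0∞) * a ^ (n - j) * b ^ (j + 1) * p (j + 1)
        + (((n + 1).choose 0 : ℕ) : ℝ≥0∞) * a ^ (n + 1 - 0) * b ^ 0 * p 0 := by
    rw [Finset.sum_range_succ'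
      (fun j => a * ((n.choose j : ℝ≥0∞) * a ^ (n - j) * b ^ j * p j)) n]
    congr 1
    · rw [Finset.sum_range_succ, Nat.choose_succ_self]
      simp only [Nat.cast_zero, zero_mul, add_zero]
      refine Finset.sum_congr rfl fun j hj => ?_
      have hj' : n - j = n - (j + 1) + 1 := by
        have := Finset.mem_range.mp hj; omega
      rw [hj', pow_succ]
      ring
    · simp [pow_succ]
      ring
  rw [hS1, hS2]
  ring


lemma qpow_eq {V : Type*} [Countable V] [DecidableEq V] (P Q : V → V → ℝ≥0∞) (a : ℝ≥0∞)
    (hQ : ∀ x y, Q x y = a * (if x = y then 1 else 0) + (1 - a) * P x y) :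
    ∀ (n : ℕ) (x y : V), kpow Q n x y = ∑ j ∈ range (n + 1),
      (n.choose j : ℝ≥0∞) * a ^ (n - j) * (1 - a) ^ j * kpow P j x y := by
  intro n
  induction n with
  | zero => intro x y; simp [kpow]
  | succ n ih =>
    intro x y
    have hstep : kpow Q (n + 1) x y = ∑' z, Q x z * kpow Q n z y := rfl
    have hterm : ∀ z, Q x z * kpow Q n z y
        = a * ((if x = z then 1 else 0) * kpow Q n z y) + (1 - a) * (P x z * kpow Q n z y) := by
      intro z; rw [hQ]; ring
    rw [hstep, tsum_congr hterm, ENNReal.tsum_add, ENNReal.tsum_mul_left, ENNReal.tsum_mul_left]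
    have h1 : ∑' z, (if x = z then 1 else 0) * kpow Q n z y = kpow Q n x y := by
      rw [tsum_eq_single x (fun z hz => by rw [if_neg (fun h => hz h.symm), zero_mul])]
      rw [if_pos rfl, one_mul]
    have h2 : ∑' z, P x z * kpow Q n z y
        = ∑ j ∈ range (n + 1),
            (n.choose j : ℝ≥0∞) * a ^ (n - j) * (1 - a) ^ j * kpow P (j + 1) x y := by
      calc ∑' z, P x z * kpow Q n z y
          = ∑' z, ∑ j ∈ range (n + 1),
              (n.choose j : ℝ≥0∞) * a ^ (n - j) * (1 - a) ^ j * (P x z * kpow P j z y) := by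
            refine tsum_congr fun z => ?_
            rw [ih z y, Finset.mul_sum]
            exact Finset.sum_congr rfl fun j _ => by ring
        _ = ∑ j ∈ range (n + 1), ∑' z,
              (n.choose j : ℝ≥0∞) * a ^ (n - j) * (1 - a) ^ j * (P x z * kpow P j z y) :=
            Summable.tsum_finsetSum fun _ _ => ENNReal.summable
        _ = _ := Finset.sum_congr rfl fun j _ => by rw [ENNReal.tsum_mul_left]; rfl
    rw [h1, h2, ih x y, Finset.mul_sum]
    -- now pure algebra with binomials
    rw [Finset.mul_sum]
    exact binom_step a (1 - a) (fun j => kpow P j x y) n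


lemma log_part (α : ℝ≥0) (hα : α < 1) :
    ∑' n : ℕ, (α : ℝ≥0∞) ^ (n + 1) * (((n + 1 : ℕ)) : ℝ≥0∞)⁻¹
      = ENNReal.ofReal (-Real.log (1 - (α : ℝ))) := by
  have habs : |(α : ℝ)| < 1 := by
    rw [abs_of_nonneg α.coe_nonneg]; exact_mod_cast hα
  have hsum := Real.hasSum_pow_div_log_of_abs_lt_one habs
  calc ∑' n : ℕ, (α : ℝ≥0∞) ^ (n + 1) * (((n + 1 : ℕ)) : ℝ≥0∞)⁻¹
      = ∑' n : ℕ, ENNReal.ofReal ((α : ℝ) ^ (n + 1) / ((n : ℝ) + 1)) := by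
        refine tsum_congr fun n => ?_
        rw [ENNReal.ofReal_div_of_pos (by positivity), ENNReal.ofReal_pow α.coe_nonneg,
          ENNReal.ofReal_coe_nnreal, div_eq_mul_inv]
        congr 1
        rw [show ((n : ℝ) + 1) = ((n + 1 : ℕ) : ℝ) by push_cast; ring, ENNReal.ofReal_natCast]
    _ = ENNReal.ofReal (∑' n : ℕ, (α : ℝ) ^ (n + 1) / ((n : ℝ) + 1)) :=
        (ENNReal.ofReal_tsum_of_nonneg (fun n => by positivity) hsum.summable).symm
    _ = ENNReal.ofReal (-Real.log (1 - (α : ℝ))) := by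
        congr 1
        have := hsum.tsum_eq
        simpa using this

lemma choose_div (m k : ℕ) :
    (((m + k + 1).choose (k + 1) : ℕ) : ℝ≥0∞) * (((m + k + 1 : ℕ)) : ℝ≥0∞)⁻¹
      = (((m + k).choose k : ℕ) : ℝ≥0∞) * (((k + 1 : ℕ)) : ℝ≥0∞)⁻¹ := by
  rw [← div_eq_mul_inv, ← div_eq_mul_inv,
    ENNReal.div_eq_div_iff (by exact_mod_cast Nat.succ_ne_zero k) (ENNReal.natCast_ne_top _)
      (by exact_mod_cast Nat.succ_ne_zero (m + k)) (ENNReal.natCast_ne_top _)]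
  have h : (k + 1) * ((m + k + 1).choose (k + 1)) = (m + k + 1) * ((m + k).choose k) := by
    have := Nat.add_one_mul_choose_eq (m + k) k
    rw [mul_comm]
    exact this.symm
  exact_mod_cast congrArg (Nat.cast : ℕ → ℝ≥0∞) h



/-- Proposition: if `P` is a transition matrix on a countable state space, `α ∈ [0,1)`, and
`Q := αI + (1-α)P`, then the return probabilities satisfy
`∑_{k≥1} q_k(x)/k = -log(1-α) + ∑_{k≥1} p_k(x)/k`, as an identity in `[0,∞]`. -/
theorem stmt3 {V : Type*} [Countable V] [DecidableEq V] (P Q : V → V → ℝ≥0∞)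
    (hP : ∀ x, ∑' y, P x y = 1) (α : ℝ≥0) (hα : α < 1)
    (hQ : ∀ x y, Q x y = (α : ℝ≥0∞) * (if x = y then 1 else 0) + (1 - (α : ℝ≥0∞)) * P x y)
    (x : V) :
    ∑' k : ℕ, kpow Q (k + 1) x x / ((k + 1 : ℕ) : ℝ≥0∞) =
      ENNReal.ofReal (-Real.log (1 - (α : ℝ))) +
        ∑' k : ℕ, kpow P (k + 1) x x / ((k + 1 : ℕ) : ℝ≥0∞) := by
  set a : ℝ≥0∞ := (α : ℝ≥0∞) with ha
  set b : ℝ≥0∞ := 1 - a with hb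
  have ha1 : a < 1 := ENNReal.coe_lt_one_iff.mpr hα
  have hb0 : b ≠ 0 := by
    rw [hb]
    exact (tsub_pos_iff_lt.mpr ha1).ne'
  have hbtop : b ≠ ∞ := (lt_of_le_of_lt tsub_le_self ENNReal.one_lt_top).ne
  -- the indicator double array
  set H : ℕ → ℕ → ℝ≥0∞ := fun j n =>
    if j ≤ n + 1 then
      (((n + 1).choose j : ℕ) : ℝ≥0∞) * a ^ (n + 1 - j) * b ^ j * kpow P j x x
        * (((n + 1 : ℕ)) : ℝ≥0∞)⁻¹
    else 0 with hH
  have step1 : ∑' k : ℕ, kpow Q (k + 1) x x / ((k + 1 : ℕ) : ℝ≥0∞)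
      = ∑' n : ℕ, ∑' j : ℕ, H j n := by
    refine tsum_congr fun n => ?_
    rw [div_eq_mul_inv, qpow_eq P Q a hQ (n + 1) x x, Finset.sum_mul,
      tsum_eq_sum (s := range (n + 2))
        (fun j hj => if_neg (fun h => hj (mem_range.mpr (by omega))))]
    refine Finset.sum_congr rfl fun j hj => ?_
    have hj' : j ≤ n + 1 := by have := mem_range.mp hj; omega
    show _ = if j ≤ n + 1 then
      (((n + 1).choose j : ℕ) : ℝ≥0∞) * a ^ (n + 1 - j) * (1 - a) ^ j * kpow P j x x
        * (((n + 1 : ℕ)) : ℝ≥0∞)⁻¹ else 0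
    rw [if_pos hj']
  have step2 : ∑' n : ℕ, ∑' j : ℕ, H j n = ∑' j : ℕ, ∑' n : ℕ, H j n := ENNReal.tsum_comm
  have col0 : ∑' n : ℕ, H 0 n = ENNReal.ofReal (-Real.log (1 - (α : ℝ))) := by
    rw [← log_part α hα]
    refine tsum_congr fun n => ?_
    have hx : kpow P 0 x x = 1 := by simp [kpow]
    show (if 0 ≤ n + 1 then
      (((n + 1).choose 0 : ℕ) : ℝ≥0∞) * a ^ (n + 1 - 0) * b ^ 0 * kpow P 0 x x
        * (((n + 1 : ℕ)) : ℝ≥0∞)⁻¹ else 0) = a ^ (n + 1) * (((n + 1 : ℕ)) : ℝ≥0∞)⁻¹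
    rw [if_pos (Nat.zero_le _)]
    simp [hx]
  have colk : ∀ k : ℕ, ∑' n : ℕ, H (k + 1) n
      = kpow P (k + 1) x x * (((k + 1 : ℕ)) : ℝ≥0∞)⁻¹ := by
    intro k
    have hrw : ∀ n : ℕ, H (k + 1) n = if k ≤ n then
        (((n + 1).choose (k + 1) : ℕ) : ℝ≥0∞) * a ^ (n - k) * b ^ (k + 1) * kpow P (k + 1) x x
          * (((n + 1 : ℕ)) : ℝ≥0∞)⁻¹ else 0 := by
      intro n
      show (if k + 1 ≤ n + 1 then
        (((n + 1).choose (k + 1) : ℕ) : ℝ≥0∞) * a ^ (n + 1 - (k + 1)) * b ^ (k + 1)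
          * kpow P (k + 1) x x * (((n + 1 : ℕ)) : ℝ≥0∞)⁻¹ else 0) = _
      by_cases h : k ≤ n
      · rw [if_pos (show k + 1 ≤ n + 1 by omega), if_pos h,
          show n + 1 - (k + 1) = n - k from by omega]
      · rw [if_neg (show ¬ (k + 1 ≤ n + 1) by omega), if_neg h]
    rw [tsum_congr hrw, tsum_ite_le]
    have hterm : ∀ m : ℕ,
        (((m + k + 1).choose (k + 1) : ℕ) : ℝ≥0∞) * a ^ (m + k - k) * b ^ (k + 1)
            * kpow P (k + 1) x x * (((m + k + 1 : ℕ)) : ℝ≥0∞)⁻¹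
        = (((m + k).choose k : ℕ) : ℝ≥0∞) * a ^ m
            * (b ^ (k + 1) * kpow P (k + 1) x x * (((k + 1 : ℕ)) : ℝ≥0∞)⁻¹) := by
      intro m
      rw [Nat.add_sub_cancel]
      calc (((m + k + 1).choose (k + 1) : ℕ) : ℝ≥0∞) * a ^ m * b ^ (k + 1)
            * kpow P (k + 1) x x * (((m + k + 1 : ℕ)) : ℝ≥0∞)⁻¹
          = ((((m + k + 1).choose (k + 1) : ℕ) : ℝ≥0∞) * (((m + k + 1 : ℕ)) : ℝ≥0∞)⁻¹)
            * (a ^ m * b ^ (k + 1) * kpow P (k + 1) x x) := by ring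
        _ = ((((m + k).choose k : ℕ) : ℝ≥0∞) * (((k + 1 : ℕ)) : ℝ≥0∞)⁻¹)
            * (a ^ m * b ^ (k + 1) * kpow P (k + 1) x x) := by rw [choose_div]
        _ = _ := by ring
    rw [tsum_congr hterm, ENNReal.tsum_mul_right, negbin a k]
    rw [show (1 - a)⁻¹ = b⁻¹ by rw [hb]]
    calc b⁻¹ ^ (k + 1) * (b ^ (k + 1) * kpow P (k + 1) x x * (((k + 1 : ℕ)) : ℝ≥0∞)⁻¹)
        = (b⁻¹ * b) ^ (k + 1) * (kpow P (k + 1) x x * (((k + 1 : ℕ)) : ℝ≥0∞)⁻¹) := by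
          rw [mul_pow]; ring
      _ = kpow P (k + 1) x x * (((k + 1 : ℕ)) : ℝ≥0∞)⁻¹ := by
          rw [ENNReal.inv_mul_cancel hb0 hbtop, one_pow, one_mul]
  rw [step1, step2, tsum_eq_zero_add' ENNReal.summable, col0]
  congr 1
  refine tsum_congr fun k => ?_
  rw [colk k, div_eq_mul_inv]
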